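/- Let x : ℝ → ℝ be differentiable with x'(t) = y(t) − z(t), where y(t) ≥ 0 for all t and z(t) ≤ d(x(t)) for a continuous nondecreasing function d with d(0) = 0. If x(0) ≥ 0 then x(t) ≥ 0 for all t ≥ 0. -/

import Mathlib

/-- Invariance of nonnegativity of traffic volumes: outflow bounded by the
demand, which vanishes at zero volume, and nonnegative inflow keep the volume
nonnegative. -/
theorem stmt_5 (x y z : ℝ → ℝ) (d : ℝ → ℝ)
    (hd_cont : Continuous d) (hd_mono : Monotone d) (hd0 : d 0 = 0)
    (hx_deriv : ∀ t, HasDerivAt x (y t - z t) t)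
    (hy_nonneg : ∀ t, 0 ≤ y t)
    (hz_demand : ∀ t, z t ≤ d (x t))
    (hx0 : 0 ≤ x 0) :
    ∀ t, 0 ≤ t → 0 ≤ x t := by
  intro t ht
  have hxc : Continuous x := by
    have : Differentiable ℝ x := fun s => (hx_deriv s).differentiableAt
    exact this.continuous
  have key : ∀ ε > 0, -x t ≤ ε * (1 + t) := by
    intro ε hε
    have h := image_le_of_deriv_right_lt_deriv_boundary
      (f := fun s => -x s) (f' := fun s => z s - y s) (a := 0) (b := t)
      (B := fun s => ε * (1 + s)) (B' := fun _ => ε)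
      hxc.neg.continuousOn
      (fun s _ => by
        have := (hx_deriv s).neg
        rw [neg_sub] at this
        exact this.hasDerivWithinAt)
      (by simpa using neg_nonpos.mpr hx0 |>.trans (by positivity))
      (fun s => by
        have : HasDerivAt (fun s : ℝ => ε * (1 + s)) (ε * (0 + 1)) s :=
          (hasDerivAt_const s (1:ℝ)).add (hasDerivAt_id s) |>.const_mul ε
        simpa using this)
      (fun s hmem hs => by
        obtain ⟨hs0, -⟩ := hmem
        have hxs : x s < 0 := by nlinarith
        have hd : d (x s) ≤ 0 := hd0 ▸ hd_mono hxs.le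
        have h1 := hz_demand s
        have h2 := hy_nonneg s
        linarith)
    have := h (Set.right_mem_Icc.mpr ht)
    simpa using this
  by_contra hneg
  push_neg at hneg
  have h1t : (0:ℝ) < 1 + t := by linarith
  have hxt : (0:ℝ) < -x t := by linarith
  have hε : (0:ℝ) < (-x t) / (2 * (1 + t)) := by positivity
  have := key _ hε
  rw [div_mul_eq_mul_div] at this
  have heq : -x t * (1 + t) / (2 * (1 + t)) = -x t / 2 := by
    field_simp
  rw [heq] at this
  linarith
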